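/- Let D=(E,𝓕) be a delta-matroid. Then the lower set system D_min=(E,𝓕_min) and the upper set system D_max=(E,𝓕_max) are matroids; that is, 𝓕_min and 𝓕_max each satisfy the basis exchange property: for all X,Y in the collection and u∈X∖Y there exists v∈Y∖X with (X∖{u})∪{v} in the collection. -/

import Mathlib

open Finset
open scoped symmDiff

noncomputable section

namespace DeltaMatroid

variable {α : Type*} [DecidableEq α]

/-- A delta-matroid on ground set `E` with feasible sets `F`: `F` is nonempty, consists of
subsets of `E`, and satisfies the symmetric exchange axiom. -/
def IsDeltaMatroid (E : Finset α) (F : Finset (Finset α)) : Prop :=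
  F.Nonempty ∧ (∀ X ∈ F, X ⊆ E) ∧
    ∀ X ∈ F, ∀ Y ∈ F, ∀ u ∈ X ∆ Y, ∃ v ∈ X ∆ Y, X ∆ ({u, v} : Finset α) ∈ F

/-- The twist `D * A` of the feasible sets by a subset `A`. -/
def twist (F : Finset (Finset α)) (A : Finset α) : Finset (Finset α) :=
  F.image fun X => A ∆ X

/-- Maximum cardinality of a feasible set. -/
def maxCard (F : Finset (Finset α)) : ℕ := F.sup Finset.card

/-- Minimum cardinality of a feasible set. -/
def minCard (F : Finset (Finset α)) : ℕ := sInf (Finset.card '' (F : Set (Finset α)))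

/-- The width `w(D)`. -/
def width (F : Finset (Finset α)) : ℕ := maxCard F - minCard F

/-- Feasible sets of minimum cardinality. -/
def Fmin (F : Finset (Finset α)) : Finset (Finset α) := F.filter fun X => X.card = minCard F

/-- Feasible sets of maximum cardinality. -/
def Fmax (F : Finset (Finset α)) : Finset (Finset α) := F.filter fun X => X.card = maxCard F

/-- `e` is a ribbon loop: it lies in no minimum-cardinality feasible set. -/
def IsRibbonLoop (F : Finset (Finset α)) (e : α) : Prop := ∀ X ∈ Fmin F, e ∉ X

/-- A ribbon loop is non-orientable if it is also a ribbon loop of `D * e`. -/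
def IsNonorientableRibbonLoop (F : Finset (Finset α)) (e : α) : Prop :=
  IsRibbonLoop F e ∧ IsRibbonLoop (twist F {e}) e

/-- A ribbon loop is orientable if it is not a ribbon loop of `D * e`. -/
def IsOrientableRibbonLoop (F : Finset (Finset α)) (e : α) : Prop :=
  IsRibbonLoop F e ∧ ¬ IsRibbonLoop (twist F {e}) e

/-- `e` is a loop: it lies in no feasible set. -/
def IsLoop (F : Finset (Finset α)) (e : α) : Prop := ∀ X ∈ F, e ∉ X

/-- `e` is a coloop: it lies in every feasible set. -/
def IsColoop (F : Finset (Finset α)) (e : α) : Prop := ∀ X ∈ F, e ∈ X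

/-- Contraction `D / e`. -/
def contract (F : Finset (Finset α)) (e : α) : Finset (Finset α) :=
  if ∀ X ∈ F, e ∉ X then F
  else (F.filter fun X => e ∈ X).image fun X => X.erase e

/-- Deletion `D \ e`. -/
def delete (F : Finset (Finset α)) (e : α) : Finset (Finset α) :=
  if ∀ X ∈ F, e ∈ X then F.image fun X => X.erase e
  else F.filter fun X => e ∉ X

/-- Deletion of every element of `A` (in some order; the order does not matter). -/
def deleteSet (F : Finset (Finset α)) (A : Finset α) : Finset (Finset α) :=
  A.toList.foldl delete F

/-- The restriction `D |_A = D \ (E \ A)` of a delta-matroid with ground set `E`. -/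
def restrict (F : Finset (Finset α)) (E A : Finset α) : Finset (Finset α) :=
  deleteSet F (E \ A)

/-- Feasible sets of the direct sum `D ⊕ D'`. -/
def directSum (F G : Finset (Finset α)) : Finset (Finset α) :=
  (F ×ˢ G).image fun p => p.1 ∪ p.2

/-- A delta-matroid is connected if it is not a direct sum of two delta-matroids on
nonempty ground sets. -/
def IsConnected (E : Finset α) (F : Finset (Finset α)) : Prop :=
  ¬ ∃ (E₁ E₂ : Finset α) (F₁ F₂ : Finset (Finset α)),
      E₁.Nonempty ∧ E₂.Nonempty ∧ Disjoint E₁ E₂ ∧ E = E₁ ∪ E₂ ∧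
      IsDeltaMatroid E₁ F₁ ∧ IsDeltaMatroid E₂ F₂ ∧ F = directSum F₁ F₂

/-- A delta-matroid is even if all feasible sets have the same parity of cardinality. -/
def IsEvenDM (F : Finset (Finset α)) : Prop :=
  ∀ X ∈ F, ∀ Y ∈ F, X.card % 2 = Y.card % 2

variable {ι : Type*} [Fintype ι] [DecidableEq ι]

/-- The feasible sets of `D(C)`: subsets `A` whose principal submatrix `C[A]` is nonsingular
(over `GF(2)`, i.e. has nonzero determinant); `C[∅]` is nonsingular by convention. -/
def binaryFeasible (C : Matrix ι ι (ZMod 2)) : Finset (Finset ι) :=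
  Finset.univ.filter fun A =>
    (C.submatrix (fun x : {a // a ∈ A} => (x : ι)) (fun x : {a // a ∈ A} => (x : ι))).det ≠ 0

/-- The (simple-graph part of the) intersection graph `G_D` of a normal binary delta-matroid
`D(C)`: distinct `u, v` adjacent iff `C u v = 1`.  Loops are recorded by the diagonal of `C`. -/
def interGraph (C : Matrix ι ι (ZMod 2)) : SimpleGraph ι :=
  SimpleGraph.fromRel fun u v => C u v = 1


lemma mem_Fmin_iff {F : Finset (Finset α)} (hne : F.Nonempty) {X : Finset α} :
    X ∈ Fmin F ↔ X ∈ F ∧ ∀ Y ∈ F, X.card ≤ Y.card := by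
  have hSne : (Finset.card '' (F : Set (Finset α))).Nonempty := by
    obtain ⟨Z, hZ⟩ := hne
    exact ⟨Z.card, ⟨Z, by simpa using hZ, rfl⟩⟩
  obtain ⟨Z₀, hZ₀, hZ₀c⟩ := Nat.sInf_mem hSne
  rw [Fmin, Finset.mem_filter]; simp only [minCard]
  constructor
  · rintro ⟨hXF, hXc⟩
    refine ⟨hXF, fun Y hY => ?_⟩
    rw [hXc]
    exact Nat.sInf_le ⟨Y, by simpa using hY, rfl⟩
  · rintro ⟨hXF, hmin⟩
    refine ⟨hXF, le_antisymm ?_ (Nat.sInf_le ⟨X, by simpa using hXF, rfl⟩)⟩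
    rw [← hZ₀c]
    exact hmin Z₀ (by simpa using hZ₀)

lemma mem_Fmax_iff {F : Finset (Finset α)} (hne : F.Nonempty) {X : Finset α} :
    X ∈ Fmax F ↔ X ∈ F ∧ ∀ Y ∈ F, Y.card ≤ X.card := by
  obtain ⟨Z₀, hZ₀, hZ₀c⟩ := Finset.exists_mem_eq_sup F hne Finset.card
  rw [Fmax, Finset.mem_filter]; simp only [maxCard]
  constructor
  · rintro ⟨hXF, hXc⟩
    exact ⟨hXF, fun Y hY => hXc ▸ Finset.le_sup hY⟩
  · rintro ⟨hXF, hmax⟩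
    refine ⟨hXF, le_antisymm (Finset.le_sup hXF) ?_⟩
    rw [hZ₀c]
    exact hmax Z₀ hZ₀

lemma mem_twist_iff {F : Finset (Finset α)} {A Z : Finset α} :
    Z ∈ twist F A ↔ ∃ X ∈ F, Z = A ∆ X := by
  simp only [twist, Finset.mem_image]
  constructor
  · rintro ⟨X, hX, rfl⟩; exact ⟨X, hX, rfl⟩
  · rintro ⟨X, hX, rfl⟩; exact ⟨X, hX, rfl⟩

lemma twist_isDeltaMatroid {E : Finset α} {F : Finset (Finset α)}
    (hD : IsDeltaMatroid E F) : IsDeltaMatroid E (twist F E) := by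
  obtain ⟨hne, hsub, hex⟩ := hD
  refine ⟨?_, ?_, ?_⟩
  · obtain ⟨X, hX⟩ := hne
    exact ⟨E ∆ X, mem_twist_iff.2 ⟨X, hX, rfl⟩⟩
  · rintro Z hZ
    obtain ⟨X, hX, rfl⟩ := mem_twist_iff.1 hZ
    rw [symmDiff_of_ge (hsub X hX)]
    exact Finset.sdiff_subset
  · rintro A hA B hB u hu
    obtain ⟨X, hX, rfl⟩ := mem_twist_iff.1 hA
    obtain ⟨Y, hY, rfl⟩ := mem_twist_iff.1 hB
    have hAB : (E ∆ X) ∆ (E ∆ Y) = X ∆ Y := by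
      ext a
      simp only [Finset.mem_symmDiff]
      tauto
    rw [hAB] at hu
    obtain ⟨v, hv, hXuv⟩ := hex X hX Y hY u hu
    refine ⟨v, by rwa [hAB], ?_⟩
    rw [symmDiff_assoc]
    exact mem_twist_iff.2 ⟨X ∆ ({u, v} : Finset α), hXuv, rfl⟩

/-- The basis-exchange property for the minimum-cardinality feasible sets, proved directly
from the symmetric exchange axiom. -/
lemma fmin_exchange {E : Finset α} {F : Finset (Finset α)} (hD : IsDeltaMatroid E F) :
    ∀ X ∈ Fmin F, ∀ Y ∈ Fmin F, ∀ u ∈ X \ Y, ∃ v ∈ Y \ X,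
      insert v (X.erase u) ∈ Fmin F := by
  obtain ⟨hne, hsub, hex⟩ := hD
  intro X hX Y hY u hu
  rw [Finset.mem_sdiff] at hu
  rw [mem_Fmin_iff hne] at hX hY
  have huXY : u ∈ X ∆ Y := Finset.mem_symmDiff.2 (Or.inl ⟨hu.1, hu.2⟩)
  obtain ⟨v, hv, hZ⟩ := hex X hX.1 Y hY.1 u huXY
  by_cases hvX : v ∈ X
  · exfalso
    have hZX : X ∆ ({u, v} : Finset α) ⊂ X := by
      constructor
      · intro a ha
        rcases Finset.mem_symmDiff.1 ha with ⟨h1, _⟩ | ⟨h1, h2⟩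
        · exact h1
        · exfalso
          rcases Finset.mem_insert.1 h1 with rfl | h1
          · exact h2 hu.1
          · rw [Finset.mem_singleton.1 h1] at h2
            exact h2 hvX
      · intro hcon
        have : u ∈ X ∆ ({u, v} : Finset α) := hcon hu.1
        rcases Finset.mem_symmDiff.1 this with ⟨_, h2⟩ | ⟨_, h2⟩
        · exact h2 (Finset.mem_insert_self u _)
        · exact h2 hu.1
    have h1 : (X ∆ ({u, v} : Finset α)).card < X.card := Finset.card_lt_card hZX
    have h2 : X.card ≤ (X ∆ ({u, v} : Finset α)).card := hX.2 _ hZ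
    omega
  · have hvY : v ∈ Y := by
      rcases Finset.mem_symmDiff.1 hv with ⟨h1, _⟩ | ⟨h1, _⟩
      · exact absurd h1 hvX
      · exact h1
    have hZeq : X ∆ ({u, v} : Finset α) = insert v (X.erase u) := by
      ext a
      simp only [Finset.mem_symmDiff, Finset.mem_insert, Finset.mem_singleton,
        Finset.mem_erase]
      constructor
      · rintro (⟨h1, h2⟩ | ⟨rfl | rfl, h2⟩)
        · exact Or.inr ⟨fun h => h2 (Or.inl h), h1⟩
        · exact absurd hu.1 h2
        · exact Or.inl rfl
      · rintro (rfl | ⟨h1, h2⟩)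
        · exact Or.inr ⟨Or.inr rfl, hvX⟩
        · refine Or.inl ⟨h2, ?_⟩
          rintro (rfl | rfl)
          · exact h1 rfl
          · exact hvX h2
    rw [hZeq] at hZ
    have hcard : (insert v (X.erase u)).card = X.card := by
      rw [Finset.card_insert_of_notMem (fun h => hvX (Finset.mem_of_mem_erase h)),
        Finset.card_erase_of_mem hu.1]
      have : 0 < X.card := Finset.card_pos.2 ⟨u, hu.1⟩
      omega
    refine ⟨v, Finset.mem_sdiff.2 ⟨hvY, hvX⟩, (mem_Fmin_iff hne).2 ⟨hZ, fun W hW => ?_⟩⟩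
    rw [hcard]
    exact hX.2 W hW

/-- Complement correspondence: maximum feasible sets of `F` are complements of minimum
feasible sets of the twist by the ground set. -/
lemma mem_Fmax_iff_compl_mem_Fmin {E : Finset α} {F : Finset (Finset α)}
    (hD : IsDeltaMatroid E F) {X : Finset α} (hXE : X ⊆ E) :
    X ∈ Fmax F ↔ E \ X ∈ Fmin (twist F E) := by
  have hne := hD.1
  have hsub := hD.2.1
  have hne' : (twist F E).Nonempty := (twist_isDeltaMatroid hD).1
  rw [mem_Fmax_iff hne, mem_Fmin_iff hne']
  constructor
  · rintro ⟨hXF, hmax⟩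
    refine ⟨mem_twist_iff.2 ⟨X, hXF, (symmDiff_of_ge hXE).symm⟩, fun Z hZ => ?_⟩
    obtain ⟨W, hW, rfl⟩ := mem_twist_iff.1 hZ
    have hWE := hsub W hW
    rw [symmDiff_of_ge hWE, Finset.card_sdiff_of_subset hXE, Finset.card_sdiff_of_subset hWE]
    exact Nat.sub_le_sub_left (hmax W hW) _
  · rintro ⟨hZ, hmin⟩
    obtain ⟨W, hW, hWeq⟩ := mem_twist_iff.1 hZ
    have hWE := hsub W hW
    rw [symmDiff_of_ge hWE] at hWeq
    have hXW : X = W := by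
      have := congrArg (fun s => E \ s) hWeq
      simpa [Finset.sdiff_sdiff_eq_self hXE, Finset.sdiff_sdiff_eq_self hWE] using this
    subst hXW
    refine ⟨hW, fun V hV => ?_⟩
    have hVE := hsub V hV
    have h1 : (E \ X).card ≤ (E ∆ V).card := hmin _ (mem_twist_iff.2 ⟨V, hV, rfl⟩)
    rw [symmDiff_of_ge hVE] at h1
    have h2 := Finset.card_sdiff_of_subset hXE
    have h3 := Finset.card_sdiff_of_subset hVE
    have h4 := Finset.card_le_card hXE
    have h5 := Finset.card_le_card hVE
    omega

/-- The minimum- and maximum-cardinality feasible sets of a delta-matroid form the bases of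
matroids (`D_min` and `D_max`): they satisfy the basis exchange property. -/
theorem lower_and_upper_matroid (E : Finset α) (F : Finset (Finset α))
    (hD : IsDeltaMatroid E F) :
    (∀ X ∈ Fmin F, ∀ Y ∈ Fmin F, ∀ u ∈ X \ Y, ∃ v ∈ Y \ X,
        insert v (X.erase u) ∈ Fmin F) ∧
    (∀ X ∈ Fmax F, ∀ Y ∈ Fmax F, ∀ u ∈ X \ Y, ∃ v ∈ Y \ X,
        insert v (X.erase u) ∈ Fmax F) := by
  refine ⟨fmin_exchange hD, ?_⟩
  -- For `Fmax`, pass to complements (the twist by `E`) and use matroid duality.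
  have hGD : IsDeltaMatroid E (twist F E) := twist_isDeltaMatroid hD
  set G := twist F E with hGdef
  -- the matroid on `↑E` whose bases are the minimum feasible sets of `G`
  set Base : Set α → Prop := fun B => ∃ Z, Z ∈ Fmin G ∧ B = (Z : Set α) with hBase
  have exB : ∃ B, Base B := by
    obtain ⟨Z₀, hZ₀, hZ₀c⟩ := Finset.exists_mem_eq_sup G hGD.1 Finset.card
    obtain ⟨Z, hZ⟩ := hGD.1
    obtain ⟨W, hW, hWc⟩ : ∃ W ∈ G, W ∈ Fmin G := by
      have hSne : (Finset.card '' (G : Set (Finset α))).Nonempty :=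
        ⟨Z.card, ⟨Z, by simpa using hZ, rfl⟩⟩
      obtain ⟨W, hW, hWc⟩ := Nat.sInf_mem hSne
      have hW' : W ∈ G := by simpa using hW
      exact ⟨W, hW', by rw [Fmin, Finset.mem_filter]; exact ⟨hW', hWc⟩⟩
    exact ⟨(W : Set α), W, hWc, rfl⟩
  have exch : Matroid.ExchangeProperty Base := by
    rintro _ _ ⟨Z₁, hZ₁, rfl⟩ ⟨Z₂, hZ₂, rfl⟩ a ha
    have ha' : a ∈ Z₁ \ Z₂ := by
      rw [Finset.mem_sdiff]
      simpa using ha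
    obtain ⟨v, hv, hins⟩ := fmin_exchange hGD Z₁ hZ₁ Z₂ hZ₂ a ha'
    rw [Finset.mem_sdiff] at hv
    refine ⟨v, by simpa using hv, insert v (Z₁.erase a), hins, ?_⟩
    simp [Finset.coe_insert, Finset.coe_erase]
  have subg : ∀ B, Base B → B ⊆ (E : Set α) := by
    rintro _ ⟨Z, hZ, rfl⟩
    have : Z ∈ G := Finset.mem_of_mem_filter _ hZ
    exact_mod_cast Finset.coe_subset.2 (hGD.2.1 Z this)
  set M : Matroid α := Matroid.ofIsBaseOfFinite E.finite_toSet Base exB exch subg with hM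
  have hMbase : ∀ B, M.IsBase B ↔ Base B := fun B => Iff.rfl
  -- dual bases of `M` are exactly (coercions of) elements of `Fmax F`
  have key : ∀ W : Finset α, M✶.IsBase (W : Set α) ↔ W ∈ Fmax F := by
    intro W
    rw [Matroid.dual_isBase_iff']
    have hME : M.E = (E : Set α) := rfl
    constructor
    · rintro ⟨hB, hWE'⟩
      have hWE : W ⊆ E := by
        rw [hME] at hWE'; exact_mod_cast hWE'
      rw [hME] at hB
      have hB' : Base ((E : Set α) \ (W : Set α)) := (hMbase _).1 hB
      obtain ⟨Z, hZ, hZeq⟩ := hB'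
      have : E \ W = Z := by
        rw [← Finset.coe_inj, Finset.coe_sdiff]
        exact hZeq
      rw [mem_Fmax_iff_compl_mem_Fmin hD hWE, this]
      exact hZ
    · intro hW
      have hWF : W ∈ F := Finset.mem_of_mem_filter _ hW
      have hWE : W ⊆ E := hD.2.1 W hWF
      have hmin : E \ W ∈ Fmin G := (mem_Fmax_iff_compl_mem_Fmin hD hWE).1 hW
      refine ⟨?_, by rw [hME]; exact_mod_cast Finset.coe_subset.2 hWE⟩
      rw [hME]
      refine (hMbase _).2 ⟨E \ W, hmin, ?_⟩
      simp [Finset.coe_sdiff]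
  -- now deduce the exchange property of `Fmax F` from the dual matroid
  intro X hX Y hY u hu
  rw [Finset.mem_sdiff] at hu
  have hbX : M✶.IsBase (X : Set α) := (key X).2 hX
  have hbY : M✶.IsBase (Y : Set α) := (key Y).2 hY
  obtain ⟨v, hv, hB⟩ := M✶.isBase_exchange _ _ hbX hbY u (by simpa using hu)
  have hv' : v ∈ Y \ X := by
    rw [Finset.mem_sdiff]
    simpa using hv
  refine ⟨v, hv', ?_⟩
  have : (insert v ((X : Set α) \ {u})) = ((insert v (X.erase u) : Finset α) : Set α) := by
    simp [Finset.coe_insert, Finset.coe_erase]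
  rw [this] at hB
  exact (key _).1 hB

end DeltaMatroid

end
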